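/- Let f : 2^S → ℝ be z-indexable, let x be a mixed Hider strategy with one target, and let σ be a search in which location j is searched in some position t and location i is searched in position t+1. Let σ' be the search obtained from σ by transposing i and j, and let A = S^σ_{t−1} be the set of locations searched before j. Then P(x,σ) − P(x,σ') = z_j · f_{A∪{j}}(i) · (x_i/z_i − x_j/z_j). In particular, since f_{A∪{j}}(i) < 0, if x_i/z_i > x_j/z_j then P(x,σ) < P(x,σ'). -/

import Mathlib

/-- The set of the first `i+1` locations searched (positions `0,…,i`) under the search `σ`. -/
def searched {n : ℕ} (σ : Equiv.Perm (Fin n)) (i : Fin n) : Finset (Fin n) :=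
  (Finset.univ.filter (fun t : Fin n => t ≤ i)).image σ

/-- The expected payoff `P(x,σ) = Σ_i x_{σ(i)} f(S^σ_i)`. -/
def pay {n : ℕ} (f : Finset (Fin n) → ℝ) (x : Fin n → ℝ) (σ : Equiv.Perm (Fin n)) : ℝ :=
  ∑ i : Fin n, x (σ i) * f (searched σ i)

/-- `f` is `z`-indexable. -/
def ZIndexable {n : ℕ} (f : Finset (Fin n) → ℝ) (z : Fin n → ℝ) : Prop :=
  (∀ r : Fin n, 0 < z r) ∧
  (∀ A : Finset (Fin n), 0 < f A) ∧
  (∀ A B : Finset (Fin n), B ⊂ A → f A < f B) ∧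
  (∀ (A : Finset (Fin n)) (i j : Fin n), i ≠ j → i ∉ A → j ∉ A →
    (f (insert i (insert j A)) - f (insert j A)) /
      (f (insert j (insert i A)) - f (insert i A)) = z i / z j)

/-- the interchange argument.  Here `j = σ t` is searched in position `t`,
`i = σ t'` is searched in the next position `t'`, `σ'` transposes `i` and `j`, and
`A` is the set of locations searched before `j`. -/
theorem interchange_formula
    {n : ℕ} (f : Finset (Fin n) → ℝ) (z : Fin n → ℝ) (x : Fin n → ℝ)
    (hf : ZIndexable f z)
    (hx : ∀ i, 0 ≤ x i) (hxsum : ∑ i, x i = 1)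
    (σ : Equiv.Perm (Fin n)) (t t' : Fin n) (ht : (t' : ℕ) = (t : ℕ) + 1) :
    pay f x σ - pay f x ((Equiv.swap t t').trans σ) =
      z (σ t) *
        (f (insert (σ t') (insert (σ t) ((Finset.univ.filter (fun s : Fin n => s < t)).image σ)))
          - f (insert (σ t) ((Finset.univ.filter (fun s : Fin n => s < t)).image σ))) *
        (x (σ t') / z (σ t') - x (σ t) / z (σ t)) ∧
    (x (σ t) / z (σ t) < x (σ t') / z (σ t') →
      pay f x σ < pay f x ((Equiv.swap t t').trans σ)) := by

  obtain ⟨hz, hfpos, hmono, hratio⟩ := hf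
  have ht2 : t < t' := by rw [Fin.lt_def]; omega
  have htne : t ≠ t' := ne_of_lt ht2
  set σ' := (Equiv.swap t t').trans σ with hσ'
  set A := (Finset.univ.filter (fun s : Fin n => s < t)).image σ with hA
  set i := σ t' with hi
  set j := σ t with hj
  have hij : i ≠ j := fun h => htne (σ.injective h).symm
  have hiA : i ∉ A := by
    rw [hA]
    simp only [Finset.mem_image, Finset.mem_filter, Finset.mem_univ, true_and, not_exists]
    rintro v ⟨hv, h⟩
    rw [hi] at h
    have := σ.injective h
    subst this
    exact absurd hv (not_lt.2 ht2.le)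
  have hjA : j ∉ A := by
    rw [hA]
    simp only [Finset.mem_image, Finset.mem_filter, Finset.mem_univ, true_and, not_exists]
    rintro v ⟨hv, h⟩
    rw [hj] at h
    have := σ.injective h
    subst this
    exact absurd hv (lt_irrefl _)
  have hfle : Finset.univ.filter (fun u : Fin n => u ≤ t) =
      insert t (Finset.univ.filter (fun u : Fin n => u < t)) := by
    ext u
    simp only [Finset.mem_filter, Finset.mem_univ, true_and, Finset.mem_insert,
      Fin.le_def, Fin.lt_def, Fin.ext_iff]
    omega
  have hfle' : Finset.univ.filter (fun u : Fin n => u ≤ t') =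
      insert t' (Finset.univ.filter (fun u : Fin n => u ≤ t)) := by
    ext u
    simp only [Finset.mem_filter, Finset.mem_univ, true_and, Finset.mem_insert,
      Fin.le_def, Fin.ext_iff]
    omega
  have hσ't : σ' t = i := by simp [hσ', hi]
  have hσ't' : σ' t' = j := by simp [hσ', hj]
  have hσ'ne : ∀ u, u ≠ t → u ≠ t' → σ' u = σ u := by
    intro u h1 h2
    simp [hσ', Equiv.swap_apply_of_ne_of_ne h1 h2]
  have hA' : (Finset.univ.filter (fun s : Fin n => s < t)).image σ' = A := by
    rw [hA]
    apply Finset.image_congr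
    intro u hu
    simp only [Finset.mem_coe, Finset.mem_filter, Finset.mem_univ, true_and] at hu
    exact hσ'ne u (ne_of_lt hu) (ne_of_lt (hu.trans ht2))
  have hst : searched σ t = insert j A := by
    simp only [searched]
    rw [hfle, Finset.image_insert, ← hj, ← hA]
  have him_t : (Finset.univ.filter (fun u : Fin n => u ≤ t)).image σ = insert j A := hst
  have hst' : searched σ t' = insert i (insert j A) := by
    simp only [searched]
    rw [hfle', Finset.image_insert, him_t, ← hi]
  have him_t2 : (Finset.univ.filter (fun u : Fin n => u ≤ t)).image σ' = insert i A := by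
    rw [hfle, Finset.image_insert, hσ't, hA']
  have hst2 : searched σ' t = insert i A := him_t2
  have hst2' : searched σ' t' = insert i (insert j A) := by
    simp only [searched]
    rw [hfle', Finset.image_insert, him_t2, hσ't', Finset.insert_comm]
  have hsearch : ∀ s : Fin n, s ≠ t → searched σ' s = searched σ s := by
    intro s hs
    have hswap : ∀ v : Fin n, v ≤ s → Equiv.swap t t' v ≤ s := by
      intro v hv
      have hv' : (v : ℕ) ≤ (s : ℕ) := hv
      have hs' : (s : ℕ) ≠ (t : ℕ) := fun h => hs (Fin.ext h)
      rcases eq_or_ne v t with rfl | h1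
      · rw [Equiv.swap_apply_left, Fin.le_def]
        omega
      rcases eq_or_ne v t' with rfl | h2
      · rw [Equiv.swap_apply_right, Fin.le_def]
        omega
      · rw [Equiv.swap_apply_of_ne_of_ne h1 h2]
        exact hv
    ext u
    simp only [searched, Finset.mem_image, Finset.mem_filter, Finset.mem_univ, true_and,
      hσ', Equiv.trans_apply]
    constructor
    · rintro ⟨v, hv, rfl⟩
      exact ⟨Equiv.swap t t' v, hswap v hv, rfl⟩
    · rintro ⟨v, hv, rfl⟩
      refine ⟨Equiv.swap t t' v, hswap v hv, ?_⟩
      simp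
  have hpay : pay f x σ - pay f x σ' =
      (x j * f (insert j A) + x i * f (insert i (insert j A))) -
      (x i * f (insert i A) + x j * f (insert i (insert j A))) := by
    simp only [pay]
    rw [← Finset.sum_sub_distrib]
    have h0 : ∀ s ∈ Finset.univ, s ∉ ({t, t'} : Finset (Fin n)) →
        x (σ s) * f (searched σ s) - x (σ' s) * f (searched σ' s) = 0 := by
      intro s _ hs
      simp only [Finset.mem_insert, Finset.mem_singleton, not_or] at hs
      rw [hσ'ne s hs.1 hs.2, hsearch s hs.1]
      ring
    rw [← Finset.sum_subset (Finset.subset_univ {t, t'}) h0, Finset.sum_pair htne]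
    rw [hst, hst', hst2, hst2', hσ't, hσ't', ← hi, ← hj]
    ring
  have hzine : z i ≠ 0 := ne_of_gt (hz i)
  have hzjne : z j ≠ 0 := ne_of_gt (hz j)
  have hD1 : f (insert i (insert j A)) - f (insert j A) < 0 := by
    have hsub : insert j A ⊂ insert i (insert j A) := by
      apply Finset.ssubset_insert
      simp only [Finset.mem_insert, not_or]
      exact ⟨hij, hiA⟩
    linarith [hmono _ _ hsub]
  have hD2 : f (insert j (insert i A)) - f (insert i A) < 0 := by
    have hsub : insert i A ⊂ insert j (insert i A) := by
      apply Finset.ssubset_insert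
      simp only [Finset.mem_insert, not_or]
      exact ⟨hij.symm, hjA⟩
    linarith [hmono _ _ hsub]
  have key : (f (insert i (insert j A)) - f (insert j A)) * z j =
      z i * (f (insert j (insert i A)) - f (insert i A)) :=
    (div_eq_div_iff (ne_of_lt hD2) hzjne).mp (hratio A i j hij hiA hjA)
  have hcomm : insert j (insert i A) = insert i (insert j A) := Finset.insert_comm j i A
  rw [hcomm] at key hD2
  have main : pay f x σ - pay f x σ' =
      z j * (f (insert i (insert j A)) - f (insert j A)) * (x i / z i - x j / z j) := by
    rw [hpay]
    have hi1 : z i * (z i)⁻¹ = 1 := mul_inv_cancel₀ hzine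
    have hj1 : z j * (z j)⁻¹ = 1 := mul_inv_cancel₀ hzjne
    linear_combination (-(x i) / z i) * key - x i * (f (insert i (insert j A)) - f (insert i A)) * hi1
      + (f (insert i (insert j A)) - f (insert j A)) * x j * hj1
  refine ⟨main, fun hlt => ?_⟩
  have hneg : z j * (f (insert i (insert j A)) - f (insert j A)) * (x i / z i - x j / z j) < 0 :=
    mul_neg_of_neg_of_pos (mul_neg_of_pos_of_neg (hz j) hD1) (sub_pos.2 hlt)
  linarith [main.trans_lt hneg]
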